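/- Let R be a PID, A and B R-modules, C ⊆ A* = Hom_R(A,R) a submodule with A*/C torsion-free, and M any R-module. Then the natural map θ: Hom_R(B,M) ⊗_R C → Hom_R(A ⊗_R B, M), θ(g ⊗ f)(x ⊗ y) = f(x)g(y), is injective. -/

import Mathlib

open TensorProduct

variable (R : Type*) [CommRing R] [IsDomain R] [IsPrincipalIdealRing R]
variable (A B M : Type*)
variable [AddCommGroup A] [Module R A] [AddCommGroup B] [Module R B]
variable [AddCommGroup M] [Module R M]
variable (C : Submodule R (A →ₗ[R] R))

/-- The natural map `θ : Hom_R(B,M) ⊗_R C → Hom_R(A ⊗_R B, M)`,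
`θ(g ⊗ f)(x ⊗ y) = f(x) • g(y)`. -/
noncomputable def thetaMap :
    ((B →ₗ[R] M) ⊗[R] C) →ₗ[R] ((A ⊗[R] B) →ₗ[R] M) :=
  TensorProduct.lift
    (LinearMap.mk₂ R
      (fun (g : B →ₗ[R] M) (f : C) => TensorProduct.lift (LinearMap.smulRight (f : A →ₗ[R] R) g))
      (fun g g' f => by
        apply TensorProduct.ext'
        intro x y
        simp [smul_add])
      (fun r g f => by
        apply TensorProduct.ext'
        intro x y
        simp only [TensorProduct.lift.tmul, LinearMap.smulRight_apply, LinearMap.smul_apply]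
        rw [smul_comm])
      (fun g f f' => by
        apply TensorProduct.ext'
        intro x y
        simp [add_smul])
      (fun r g f => by
        apply TensorProduct.ext'
        intro x y
        simp [mul_smul]))

section PsiAux

open Function
open scoped DirectSum

set_option synthInstance.maxHeartbeats 1000000
set_option maxHeartbeats 1000000

variable {R : Type*} [CommRing R]
variable {A : Type*} [AddCommGroup A] [Module R A]
variable (C : Submodule R (A →ₗ[R] R))

/-- The natural map `N ⊗ C → Hom(A, N)`, `n ⊗ f ↦ (x ↦ f(x) • n)`. -/
noncomputable def psiAux (N : Type*) [AddCommGroup N] [Module R N] :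
    N ⊗[R] C →ₗ[R] (A →ₗ[R] N) :=
  TensorProduct.lift ((LinearMap.smulRightₗ.comp C.subtype).flip)

@[simp] lemma psiAux_tmul (N : Type*) [AddCommGroup N] [Module R N] (n : N) (f : C) :
    psiAux C N (n ⊗ₜ f) = (f : A →ₗ[R] R).smulRight n := rfl

lemma psiAux_naturality {N N' : Type*} [AddCommGroup N] [Module R N]
    [AddCommGroup N'] [Module R N'] (g : N →ₗ[R] N') (t : N ⊗[R] C) :
    psiAux C N' (g.rTensor C t) = g ∘ₗ psiAux C N t := by
  induction t using TensorProduct.induction_on with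
  | zero => simp
  | tmul n f => ext x; simp
  | add x y hx hy => simp only [map_add, hx, hy, LinearMap.comp_add]

lemma psiAux_inj_of_family {N : Type*} [AddCommGroup N] [Module R N]
    {ι : Type*} {V : ι → Type*} [∀ i, AddCommGroup (V i)] [∀ i, Module R (V i)]
    (π : ∀ i, N →ₗ[R] V i)
    (hjoint : ∀ t : N ⊗[R] C, (∀ i, (π i).rTensor C t = 0) → t = 0)
    (hV : ∀ i, Injective (psiAux C (V i))) :
    Injective (psiAux C N) := by
  rw [injective_iff_map_eq_zero]
  intro t ht
  refine hjoint t fun i => hV i ?_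
  rw [map_zero, psiAux_naturality, ht, LinearMap.comp_zero]

lemma psiAux_inj_equiv {N N' : Type*} [AddCommGroup N] [Module R N]
    [AddCommGroup N'] [Module R N'] (e : N ≃ₗ[R] N')
    (h : Injective (psiAux C N')) : Injective (psiAux C N) :=
  psiAux_inj_of_family C (fun _ : Unit => e.toLinearMap)
    (fun t ht => by
      have h3 : (LinearEquiv.rTensor (↥C) e) t = 0 := ht ()
      exact (LinearEquiv.map_eq_zero_iff _).mp h3)
    (fun _ => h)

lemma psiAux_R_injective : Injective (psiAux C R) := by
  have h : (psiAux C R) = C.subtype ∘ₗ (TensorProduct.lid R C).toLinearMap := by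
    apply TensorProduct.ext'
    intro r f
    ext x
    simp [mul_comm]
  rw [h]
  exact C.injective_subtype.comp (TensorProduct.lid R C).injective

lemma psiAux_quot_injective [IsDomain R]
    (hC : ∀ (f : A →ₗ[R] R) (r : R), r ≠ 0 → r • f ∈ C → f ∈ C)
    (q : R) (hq : q ≠ 0) :
    Injective (psiAux C (R ⧸ (R ∙ q : Submodule R R))) := by
  set I : Ideal R := (R ∙ q : Submodule R R) with hI
  rw [injective_iff_map_eq_zero]
  intro t ht
  obtain ⟨f, hf⟩ := Submodule.Quotient.mk_surjective _
    (quotTensorEquivQuotSMul (↥C) I t)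
  have ht' : t = (quotTensorEquivQuotSMul (↥C) I).symm (Submodule.Quotient.mk f) := by
    rw [hf, LinearEquiv.symm_apply_apply]
  rw [ht'] at ht
  rw [quotTensorEquivQuotSMul_symm_mk] at ht
  -- values of f are divisible by q
  have hdvd : ∀ x : A, ∃ s : R, q * s = (f : A →ₗ[R] R) x := by
    intro x
    have h1 : ((f : A →ₗ[R] R) x) • (1 : R ⧸ I) = 0 := by
      have := congrArg (fun g : A →ₗ[R] R ⧸ I => g x) ht
      simpa using this
    have h2 : (f : A →ₗ[R] R) x ∈ I := by
      rw [← Submodule.Quotient.mk_eq_zero I]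
      have hmk : (Submodule.Quotient.mk ((f : A →ₗ[R] R) x) : R ⧸ I)
          = ((f : A →ₗ[R] R) x) • (1 : R ⧸ I) := by
        rw [show (1 : R ⧸ I) = Submodule.Quotient.mk (1 : R) from rfl,
          ← Submodule.Quotient.mk_smul, smul_eq_mul, mul_one]
      rw [hmk]
      exact h1
    rw [hI, Submodule.mem_span_singleton] at h2
    obtain ⟨s, hs⟩ := h2
    exact ⟨s, by rw [← hs, smul_eq_mul, mul_comm]⟩
  choose s hs using hdvd
  let h₀ : A →ₗ[R] R :=
    { toFun := s
      map_add' := fun x y => by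
        apply mul_left_cancel₀ hq
        rw [hs, map_add, ← hs, ← hs, mul_add]
      map_smul' := fun r x => by
        apply mul_left_cancel₀ hq
        simp only [RingHom.id_apply, smul_eq_mul]
        rw [hs, map_smul, smul_eq_mul, ← hs]
        ring }
  have hqh : q • h₀ = (f : A →ₗ[R] R) := by
    ext x
    simp only [LinearMap.smul_apply, smul_eq_mul]
    exact hs x
  have hmem : h₀ ∈ C := hC h₀ q hq (by rw [hqh]; exact f.2)
  have hfC : f = q • (⟨h₀, hmem⟩ : C) := by
    apply Subtype.ext
    simp only [SetLike.val_smul]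
    exact hqh.symm
  have hfI : f ∈ I • (⊤ : Submodule R C) := by
    rw [hfC]
    exact Submodule.smul_mem_smul (Submodule.mem_span_singleton_self q) trivial
  rw [ht', (Submodule.Quotient.mk_eq_zero _).mpr hfI]
  exact (LinearEquiv.map_eq_zero_iff _).mpr rfl

lemma rTensor_lapply_joint_inj {ι : Type*} [DecidableEq ι] (t : (ι →₀ R) ⊗[R] C)
    (h : ∀ i, ((Finsupp.lapply i : (ι →₀ R) →ₗ[R] R).rTensor C) t = 0) : t = 0 := by
  have key : ∀ i, TensorProduct.finsuppScalarLeft R C ι t i =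
      TensorProduct.lid R C ((Finsupp.lapply i : (ι →₀ R) →ₗ[R] R).rTensor C t) := by
    intro i
    clear h
    induction t using TensorProduct.induction_on with
    | zero => simp
    | tmul p c =>
      simp [TensorProduct.finsuppScalarLeft_apply_tmul_apply, LinearMap.rTensor_tmul]
    | add x y hx hy => simp [map_add, hx, hy]
  have h0 : TensorProduct.finsuppScalarLeft R C ι t = 0 :=
    Finsupp.ext fun i => by rw [key, h i]; simp
  exact (LinearEquiv.map_eq_zero_iff _).mp h0

lemma rTensor_component_joint_inj {ι : Type*} [DecidableEq ι] (V : ι → Type*)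
    [∀ i, AddCommGroup (V i)] [∀ i, Module R (V i)]
    (t : (DirectSum ι V) ⊗[R] C)
    (h : ∀ i, ((DirectSum.component R ι V i).rTensor C) t = 0) : t = 0 := by
  have key : ∀ i, (DirectSum.component R ι (fun j => V j ⊗[R] C) i).comp
      (TensorProduct.directSumLeft R R V (↥C)).toLinearMap
      = (DirectSum.component R ι V i).rTensor C := by
    intro i
    apply TensorProduct.ext
    refine DirectSum.linearMap_ext R fun j => ?_
    ext v c
    simp only [LinearMap.compr₂_apply, LinearMap.compr₂ₛₗ_apply, TensorProduct.mk_apply, LinearMap.coe_comp,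
      LinearEquiv.coe_coe, Function.comp_apply, TensorProduct.directSumLeft_tmul_lof,
      LinearMap.rTensor_tmul]
    by_cases hij : j = i
    · subst hij
      simp [DirectSum.component.lof_self]
    · rw [DirectSum.component.of, DirectSum.component.of]
      rw [dif_neg hij, dif_neg hij, TensorProduct.zero_tmul]
  have h0 : TensorProduct.directSumLeft R R V (↥C) t = 0 := by
    refine DirectSum.ext_component R fun i => ?_
    have h2 := congrArg (fun g : (DirectSum ι V) ⊗[R] C →ₗ[R] V i ⊗[R] C => g t) (key i)
    simp only [LinearMap.coe_comp, LinearEquiv.coe_coe, Function.comp_apply] at h2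
    simpa [h i] using h2
  exact (LinearEquiv.map_eq_zero_iff _).mp h0

lemma psiAux_finsupp_injective {ι : Type*} [DecidableEq ι] :
    Injective (psiAux C (ι →₀ R)) :=
  psiAux_inj_of_family C (fun i => (Finsupp.lapply i : (ι →₀ R) →ₗ[R] R))
    (fun t ht => rTensor_lapply_joint_inj C t ht)
    (fun _ => psiAux_R_injective C)

lemma psiAux_directSum_injective {ι : Type*} [DecidableEq ι] (V : ι → Type*)
    [∀ i, AddCommGroup (V i)] [∀ i, Module R (V i)]
    (hV : ∀ i, Injective (psiAux C (V i))) :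
    Injective (psiAux C (DirectSum ι V)) :=
  psiAux_inj_of_family C (DirectSum.component R ι V)
    (fun t ht => rTensor_component_joint_inj C V t ht) hV

lemma psiAux_prod_injective {N N' : Type*} [AddCommGroup N] [Module R N]
    [AddCommGroup N'] [Module R N']
    (hN : Injective (psiAux C N)) (hN' : Injective (psiAux C N')) :
    Injective (psiAux C (N × N')) := by
  rw [injective_iff_map_eq_zero] at hN hN' ⊢
  intro t ht
  have h1 : (LinearMap.fst R N N').rTensor C t = 0 :=
    hN _ (by rw [psiAux_naturality, ht, LinearMap.comp_zero])
  have h2 : (LinearMap.snd R N N').rTensor C t = 0 :=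
    hN' _ (by rw [psiAux_naturality, ht, LinearMap.comp_zero])
  have hp : TensorProduct.prodLeft R R N N' (↥C) t
      = ((LinearMap.fst R N N').rTensor C t, (LinearMap.snd R N N').rTensor C t) := by
    clear h1 h2 ht
    induction t using TensorProduct.induction_on with
    | zero => simp; rfl
    | tmul p c =>
      obtain ⟨n, n'⟩ := p
      simp [LinearMap.rTensor_tmul]
    | add x y hx hy => simp [map_add, hx, hy, Prod.add_def]
  have h0 : TensorProduct.prodLeft R R N N' (↥C) t = 0 := by
    rw [hp, h1, h2]
    rfl
  exact (LinearEquiv.map_eq_zero_iff _).mp h0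

lemma psiAux_fg_injective [IsDomain R] [IsPrincipalIdealRing R]
    (hC : ∀ (f : A →ₗ[R] R) (r : R), r ≠ 0 → r • f ∈ C → f ∈ C)
    (N : Type*) [AddCommGroup N] [Module R N] [Module.Finite R N] :
    Injective (psiAux C N) := by
  -- replace `N` by a copy in the same universe as `R`
  obtain ⟨n, φ, hφ⟩ := Module.Finite.exists_fin' R N
  let e : ((Fin n → R) ⧸ LinearMap.ker φ) ≃ₗ[R] N := φ.quotKerEquivOfSurjective hφ
  refine psiAux_inj_equiv C e.symm ?_
  -- structure theorem for f.g. modules over a PID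
  obtain ⟨m, ι, fι, p, hp, ee, ⟨eqv⟩⟩ :=
    Module.equiv_free_prod_directSum (R := R) (M := (Fin n → R) ⧸ LinearMap.ker φ)
  refine psiAux_inj_equiv C eqv ?_
  classical
  refine psiAux_prod_injective C (psiAux_finsupp_injective C) ?_
  refine psiAux_directSum_injective C _ fun i => ?_
  exact psiAux_quot_injective C hC _ (pow_ne_zero _ (hp i).ne_zero)

lemma psiAux_injective [IsDomain R] [IsPrincipalIdealRing R]
    (hC : ∀ (f : A →ₗ[R] R) (r : R), r ≠ 0 → r • f ∈ C → f ∈ C)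
    (N : Type*) [AddCommGroup N] [Module R N] :
    Injective (psiAux C N) := by
  rw [injective_iff_map_eq_zero]
  intro t ht
  obtain ⟨N₀, hfin, hsub⟩ := TensorProduct.exists_finite_submodule_left_of_setFinite
    ({t} : Set (N ⊗[R] C)) (Set.finite_singleton t)
  obtain ⟨t₀, ht₀⟩ := hsub (Set.mem_singleton t)
  haveI := hfin
  have h3 : N₀.subtype ∘ₗ psiAux C N₀ t₀ = 0 := by
    rw [← psiAux_naturality, ht₀, ht]
  have hz : psiAux C N₀ t₀ = 0 := by
    apply LinearMap.ext; intro x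
    apply Subtype.ext
    have := LinearMap.congr_fun h3 x
    simpa using this
  have ht0 : t₀ = 0 :=
    (injective_iff_map_eq_zero _).mp (psiAux_fg_injective C hC N₀) t₀ hz
  rw [← ht₀, ht0, map_zero]

end PsiAux

/-- **Injectivity of `θ` (Lemma A.2 of the paper).**  Let `R` be a PID, `A`, `B`, `M`
`R`-modules, and `C ⊆ A* = Hom_R(A,R)` a submodule such that `A*/C` is torsion-free.
Then the natural map `θ : Hom_R(B,M) ⊗_R C → Hom_R(A ⊗_R B, M)`, sending `g ⊗ f` to
`x ⊗ y ↦ f(x) g(y)`, is injective. -/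
theorem thetaMap_injective
    (hC : ∀ (f : A →ₗ[R] R) (r : R), r ≠ 0 → r • f ∈ C → f ∈ C) :
    Function.Injective (thetaMap R A B M C) := by
  have key : thetaMap R A B M C =
      (TensorProduct.lift.equiv (RingHom.id R) A B M).toLinearMap ∘ₗ psiAux C (B →ₗ[R] M) := by
    apply TensorProduct.ext'
    intro g f
    apply TensorProduct.ext'
    intro x y
    simp [thetaMap, psiAux, TensorProduct.lift.equiv]
  rw [key, LinearMap.coe_comp]
  exact (TensorProduct.lift.equiv (RingHom.id R) A B M).injective.comp (psiAux_injective C hC _)
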